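/- Let F, g, f be as in the change-of-variables setting: g : [a,b] → ℝ differentiable a.e., F differentiable a.e. with F' = f a.e. Let B be the set where (F∘g)' = (f∘g)·g' fails and let A = g⁻¹(A_F) ∪ A_g, where A_F, A_g are the sets where F and g respectively fail to be differentiable. Then (F∘g)' = 0 almost everywhere on the symmetric difference (B \ A) ∪ (A \ B), and hence F∘g has negligible variation on (B \ A) ∪ (A \ B). -/

import Mathlib

open Set MeasureTheory Filter
open scoped Classical
open Function Asymptotics
open scoped ENNReal NNReal

/-- A tagged partition of `[a, b]`: division points `t 0 = a ≤ t 1 ≤ ⋯ ≤ t n = b`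
together with tags `tag i ∈ [t i, t (i+1)]`. -/
structure TaggedPartition (a b : ℝ) where
  n : ℕ
  t : ℕ → ℝ
  tag : ℕ → ℝ
  t_first : t 0 = a
  t_last : t n = b
  t_mono : ∀ i < n, t i ≤ t (i + 1)
  tag_mem : ∀ i < n, tag i ∈ Set.Icc (t i) (t (i + 1))

/-- A tagged partition is subordinate to a gauge `δ` if each interval is contained in the
open ball of radius `δ` around its tag. -/
def TaggedPartition.Subordinate {a b : ℝ} (P : TaggedPartition a b) (δ : ℝ → ℝ) : Prop :=
  ∀ i < P.n,
    Set.Icc (P.t i) (P.t (i + 1)) ⊆ Set.Ioo (P.tag i - δ (P.tag i)) (P.tag i + δ (P.tag i))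

/-- A gauge on `[a, b]` is positive on `[a, b]`. -/
def IsGauge (a b : ℝ) (δ : ℝ → ℝ) : Prop := ∀ x ∈ Set.Icc a b, 0 < δ x

/-- `f` has negligible variation on `E ⊆ [a, b]`. -/

def NegVar (a b : ℝ) (f : ℝ → ℝ) (E : Set ℝ) : Prop :=
  ∀ ε > 0, ∃ δ : ℝ → ℝ, IsGauge a b δ ∧ ∀ P : TaggedPartition a b, P.Subordinate δ →
    (∑ i ∈ Finset.range P.n,
      if P.tag i ∈ E then |f (P.t (i + 1)) - f (P.t i)| else 0) < ε

/-- `f` has negligible conditional variation on `E ⊆ [a, b]`. -/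

def NegCondVar (a b : ℝ) (f : ℝ → ℝ) (E : Set ℝ) : Prop :=
  ∀ ε > 0, ∃ δ : ℝ → ℝ, IsGauge a b δ ∧ ∀ P : TaggedPartition a b, P.Subordinate δ →
    |∑ i ∈ Finset.range P.n,
      if P.tag i ∈ E then f (P.t (i + 1)) - f (P.t i) else 0| < ε

/-- `I` is the Henstock–Kurzweil integral of `h` on `[a, b]` (with `a ≤ b`). -/
def HKIntegralTo (a b : ℝ) (h : ℝ → ℝ) (I : ℝ) : Prop :=
  ∀ ε > 0, ∃ δ : ℝ → ℝ, IsGauge a b δ ∧ ∀ P : TaggedPartition a b, P.Subordinate δ →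
    |(∑ i ∈ Finset.range P.n, h (P.tag i) * (P.t (i + 1) - P.t i)) - I| < ε

/-- Oriented HK integral: `(HK)∫_a^b h = I`, with the convention
`(HK)∫_b^a h = -(HK)∫_a^b h`. -/
def HKIntegral (a b : ℝ) (h : ℝ → ℝ) (I : ℝ) : Prop :=
  if a ≤ b then HKIntegralTo a b h I else HKIntegralTo b a h (-I)

/-- with `B` the set where the chain rule fails and
`A = g⁻¹(A_F) ∪ A_g` (`A_F`, `A_g` the non-differentiability sets of `F` and `g`),
`(F ∘ g)' = 0` a.e. on the symmetric difference of `B` and `A`, and `F ∘ g` has negligible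
variation there. -/
lemma piece_null {g : ℝ → ℝ} {N : Set ℝ} (hN : volume N = 0) (K : ℝ) (S : Set ℝ)
    (hSN : ∀ x ∈ S, g x ∈ N)
    (hexp : ∀ x ∈ S, ∀ y ∈ S, |y - x| ≤ K * |g y - g x|) :
    volume S = 0 := by
  have hinj : InjOn g S := by
    intro x hx y hy hxy
    have := hexp x hx y hy
    rw [hxy, sub_self, abs_zero, mul_zero] at this
    have h0 : y - x = 0 := abs_nonpos_iff.mp this
    linarith [sub_eq_zero.mp h0]
  set φ := invFunOn g S with hφ
  have hlip : LipschitzOnWith K.toNNReal φ (g '' S) := by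
    apply LipschitzOnWith.of_dist_le_mul
    rintro u ⟨x, hx, rfl⟩ v ⟨y, hy, rfl⟩
    have e1 : φ (g x) = x := hinj.leftInvOn_invFunOn hx
    have e2 : φ (g y) = y := hinj.leftInvOn_invFunOn hy
    rw [e1, e2, Real.dist_eq, Real.dist_eq]
    calc |x - y| ≤ K * |g x - g y| := hexp y hy x hx
      _ ≤ ↑K.toNNReal * |g x - g y| := by
          apply mul_le_mul_of_nonneg_right _ (abs_nonneg _)
          rw [Real.coe_toNNReal']; exact le_max_left _ _
  have hsub : S ⊆ φ '' (g '' S) := by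
    intro x hx
    exact ⟨g x, mem_image_of_mem g hx, hinj.leftInvOn_invFunOn hx⟩
  refine le_antisymm ?_ (zero_le)
  calc volume S ≤ volume (φ '' (g '' S)) := measure_mono hsub
    _ = μH[1] (φ '' (g '' S)) := by rw [hausdorffMeasure_real]
    _ ≤ (K.toNNReal : ℝ≥0∞) ^ (1:ℝ) * μH[1] (g '' S) :=
        hlip.hausdorffMeasure_image_le zero_le_one
    _ ≤ (K.toNNReal : ℝ≥0∞) ^ (1:ℝ) * μH[1] N := by
        exact mul_le_mul_right (measure_mono (image_subset_iff.mpr hSN)) _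
    _ = 0 := by
        rw [hausdorffMeasure_real, hN, mul_zero]

lemma sv_null {g : ℝ → ℝ} {N : Set ℝ} (hN : volume N = 0) :
    volume {x : ℝ | g x ∈ N ∧ ∃ L, L ≠ 0 ∧ HasDerivAt g L x} = 0 := by
  set E : ℕ → ℕ → Set ℝ := fun m j =>
    {x | g x ∈ N ∧ ∀ y, |y - x| ≤ 1/(j+1:ℝ) → |y - x| ≤ (m+1:ℝ) * |g y - g x|} with hE
  have hcover : {x : ℝ | g x ∈ N ∧ ∃ L, L ≠ 0 ∧ HasDerivAt g L x} ⊆ ⋃ m, ⋃ j, E m j := by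
    rintro x ⟨hxN, L, hL, hd⟩
    have hLpos : 0 < |L| := abs_pos.mpr hL
    have hL2 : 0 < |L| / 2 := by positivity
    have hlo := (hasDerivAt_iff_isLittleO.mp hd).def hL2
    rw [Metric.eventually_nhds_iff] at hlo
    obtain ⟨d, hd0, hball⟩ := hlo
    obtain ⟨m, hm⟩ := exists_nat_ge (2 / |L|)
    obtain ⟨j, hj⟩ := exists_nat_one_div_lt hd0
    refine mem_iUnion.mpr ⟨m, mem_iUnion.mpr ⟨j, hxN, fun y hy => ?_⟩⟩
    have hb := hball (show dist y x < d by rw [Real.dist_eq]; exact lt_of_le_of_lt hy hj)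
    simp only [Real.norm_eq_abs, smul_eq_mul] at hb
    have tri := abs_sub_abs_le_abs_sub ((y-x)*L) (g y - g x)
    have e : |(y-x)*L - (g y - g x)| = |g y - g x - (y-x)*L| := abs_sub_comm _ _
    have am : |(y-x)*L| = |y-x| * |L| := abs_mul _ _
    have cm : |y-x| * |L| = |L| * |y-x| := mul_comm _ _
    have key : |L|/2 * |y - x| ≤ |g y - g x| := by nlinarith [abs_nonneg (y - x)]
    have h4 : |y - x| ≤ 2/|L| * |g y - g x| := by
      rw [div_mul_eq_mul_div, le_div_iff₀ hLpos]
      nlinarith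
    calc |y - x| ≤ 2/|L| * |g y - g x| := h4
      _ ≤ (m+1:ℝ) * |g y - g x| := by
          apply mul_le_mul_of_nonneg_right _ (abs_nonneg _)
          push_cast; linarith
  refine measure_mono_null hcover ?_
  refine measure_iUnion_null fun m => measure_iUnion_null fun j => ?_
  have hsub : E m j ⊆ ⋃ z : ℤ, (E m j ∩ Icc ((z:ℝ)/(j+1)) ((z+1:ℝ)/(j+1))) := by
    intro x hx
    refine mem_iUnion.mpr ⟨⌊x * (j+1:ℝ)⌋, hx, ?_, ?_⟩
    · rw [div_le_iff₀ (by positivity)]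
      exact Int.floor_le _
    · rw [le_div_iff₀ (by positivity)]
      push_cast
      linarith [Int.lt_floor_add_one (x * (j+1:ℝ))]
  refine measure_mono_null hsub (measure_iUnion_null fun z => ?_)
  apply piece_null hN ((m:ℝ)+1)
  · rintro y ⟨hy, -⟩; exact hy.1
  · rintro y ⟨hy, hy1, hy2⟩ w ⟨hw, hw1, hw2⟩
    apply hy.2
    rw [abs_sub_le_iff]
    have hlen : ((z:ℝ)+1)/(j+1) - (z:ℝ)/(j+1) = 1/(j+1:ℝ) := by ring
    exact ⟨by linarith, by linarith⟩

lemma tp_le {a b : ℝ} (P : TaggedPartition a b) :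
    ∀ j, j ≤ P.n → ∀ i, i ≤ j → P.t i ≤ P.t j := by
  intro j
  induction j with
  | zero => intro _ i hi; interval_cases i; exact le_refl _
  | succ k ih =>
    intro hk i hi
    rcases Nat.eq_or_lt_of_le hi with rfl | hlt
    · exact le_refl _
    · exact le_trans (ih (by omega) i (by omega)) (P.t_mono k (by omega))

lemma sum_length_le {a b : ℝ} (P : TaggedPartition a b) {U : Set ℝ}
    (hUm : MeasurableSet U) (hUfin : volume U ≠ ⊤) (J : Finset ℕ)
    (hJ : ∀ i ∈ J, i < P.n ∧ Set.Ioo (P.t i) (P.t (i + 1)) ⊆ U) :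
    ∑ i ∈ J, (P.t (i + 1) - P.t i) ≤ (volume U).toReal := by
  have hlen : ∀ i ∈ J, 0 ≤ P.t (i + 1) - P.t i := fun i hi =>
    sub_nonneg.mpr (P.t_mono i (hJ i hi).1)
  have key : ∀ i ∈ J, ∀ j ∈ J, i < j →
      Disjoint (Set.Ioo (P.t i) (P.t (i+1))) (Set.Ioo (P.t j) (P.t (j+1))) := by
    intro i hi j hj hij
    apply Set.disjoint_left.mpr
    rintro x ⟨-, hx2⟩ ⟨hx3, -⟩
    have : P.t (i+1) ≤ P.t j := tp_le P j (le_of_lt (hJ j hj).1) (i+1) (by omega)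
    linarith
  have hd : (J : Set ℕ).PairwiseDisjoint (fun i => Set.Ioo (P.t i) (P.t (i+1))) := by
    intro i hi j hj hij
    rcases lt_or_gt_of_ne hij with h | h
    · exact key i hi j hj h
    · exact (key j hj i hi h).symm
  have h1 : ENNReal.ofReal (∑ i ∈ J, (P.t (i + 1) - P.t i)) ≤ volume U := by
    rw [ENNReal.ofReal_sum_of_nonneg hlen]
    have : ∑ i ∈ J, ENNReal.ofReal (P.t (i+1) - P.t i)
        = volume (⋃ i ∈ J, Set.Ioo (P.t i) (P.t (i+1))) := by
      rw [measure_biUnion_finset hd (fun i _ => measurableSet_Ioo)]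
      simp [Real.volume_Ioo]
    rw [this]
    exact measure_mono (Set.iUnion₂_subset fun i hi => (hJ i hi).2)
  exact (ENNReal.ofReal_le_iff_le_toReal hUfin).mp h1

lemma negVar_mono {a b : ℝ} {h : ℝ → ℝ} {E E' : Set ℝ} (hsub : E ⊆ E')
    (hV : NegVar a b h E') : NegVar a b h E := by
  intro ε hε
  obtain ⟨δ, hδ, hP⟩ := hV ε hε
  refine ⟨δ, hδ, fun P hPs => lt_of_le_of_lt (Finset.sum_le_sum fun i _ => ?_) (hP P hPs)⟩
  split_ifs with h1 h2
  · exact le_refl _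
  · exact absurd (hsub h1) h2
  · exact abs_nonneg _
  · exact le_refl _

lemma negVar_union {a b : ℝ} {h : ℝ → ℝ} {E₁ E₂ : Set ℝ}
    (h1 : NegVar a b h E₁) (h2 : NegVar a b h E₂) : NegVar a b h (E₁ ∪ E₂) := by
  intro ε hε
  obtain ⟨δ₁, hδ₁, hP₁⟩ := h1 (ε/2) (by positivity)
  obtain ⟨δ₂, hδ₂, hP₂⟩ := h2 (ε/2) (by positivity)
  refine ⟨fun x => min (δ₁ x) (δ₂ x), fun x hx => lt_min (hδ₁ x hx) (hδ₂ x hx), fun P hPs => ?_⟩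
  have hs1 : P.Subordinate δ₁ := by
    intro i hi
    refine (hPs i hi).trans (Set.Ioo_subset_Ioo ?_ ?_) <;>
      linarith [min_le_left (δ₁ (P.tag i)) (δ₂ (P.tag i))]
  have hs2 : P.Subordinate δ₂ := by
    intro i hi
    refine (hPs i hi).trans (Set.Ioo_subset_Ioo ?_ ?_) <;>
      linarith [min_le_right (δ₁ (P.tag i)) (δ₂ (P.tag i))]
  refine lt_of_le_of_lt (Finset.sum_le_sum (g := fun i =>
      (if P.tag i ∈ E₁ then |h (P.t (i + 1)) - h (P.t i)| else 0) +
      (if P.tag i ∈ E₂ then |h (P.t (i + 1)) - h (P.t i)| else 0)) (fun i _ => by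
    rcases Classical.em (P.tag i ∈ E₁) with h1' | h1' <;>
    rcases Classical.em (P.tag i ∈ E₂) with h2' | h2' <;>
    simp [h1', h2', abs_nonneg])) ?_
  rw [Finset.sum_add_distrib]
  have := add_lt_add (hP₁ P hs1) (hP₂ P hs2)
  linarith

lemma negVar_zero {a b : ℝ} (hab : a ≤ b) {h : ℝ → ℝ} {E : Set ℝ}
    (hE : ∀ x ∈ E, HasDerivAt h 0 x) : NegVar a b h E := by
  intro ε hε
  set c : ℝ := ε / (2*(b-a)+2) with hc
  have hcpos : 0 < c := by
    apply div_pos hε; linarith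
  have hx : ∀ x : ℝ, ∃ d, 0 < d ∧ (x ∈ E → ∀ y, |y - x| < d → |h y - h x| ≤ c * |y - x|) := by
    intro x
    by_cases hxE : x ∈ E
    · have hlo := (hasDerivAt_iff_isLittleO.mp (hE x hxE)).def hcpos
      rw [Metric.eventually_nhds_iff] at hlo
      obtain ⟨d, hd0, hball⟩ := hlo
      refine ⟨d, hd0, fun _ y hy => ?_⟩
      have := hball (show dist y x < d by rwa [Real.dist_eq])
      simpa [Real.norm_eq_abs] using this
    · exact ⟨1, one_pos, fun hx' => absurd hx' hxE⟩
  choose δ hδpos hδ using hx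
  refine ⟨δ, fun x _ => hδpos x, fun P hPs => ?_⟩
  have key : ∀ i ∈ Finset.range P.n,
      (if P.tag i ∈ E then |h (P.t (i + 1)) - h (P.t i)| else 0) ≤ c * (P.t (i+1) - P.t i) := by
    intro i hi
    rw [Finset.mem_range] at hi
    have hlen : P.t i ≤ P.t (i+1) := P.t_mono i hi
    split_ifs with htag
    · obtain ⟨htag1, htag2⟩ := P.tag_mem i hi
      have hl : P.t i ∈ Set.Ioo (P.tag i - δ (P.tag i)) (P.tag i + δ (P.tag i)) :=
        hPs i hi ⟨le_refl _, hlen⟩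
      have hr : P.t (i+1) ∈ Set.Ioo (P.tag i - δ (P.tag i)) (P.tag i + δ (P.tag i)) :=
        hPs i hi ⟨hlen, le_refl _⟩
      have habs1 : |P.t i - P.tag i| < δ (P.tag i) := by
        rw [abs_lt]; exact ⟨by linarith [hl.1], by linarith [hl.2]⟩
      have habs2 : |P.t (i+1) - P.tag i| < δ (P.tag i) := by
        rw [abs_lt]; exact ⟨by linarith [hr.1], by linarith [hr.2]⟩
      have b1 := hδ (P.tag i) htag (P.t i) habs1
      have b2 := hδ (P.tag i) htag (P.t (i+1)) habs2
      have e1 : |P.t i - P.tag i| = P.tag i - P.t i := by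
        rw [abs_sub_comm]; exact abs_of_nonneg (by linarith)
      have e2 : |P.t (i+1) - P.tag i| = P.t (i+1) - P.tag i := abs_of_nonneg (by linarith)
      rw [e1] at b1; rw [e2] at b2
      calc |h (P.t (i + 1)) - h (P.t i)|
          ≤ |h (P.t (i+1)) - h (P.tag i)| + |h (P.tag i) - h (P.t i)| := by
            have := abs_sub_le (h (P.t (i+1))) (h (P.tag i)) (h (P.t i)); linarith
        _ ≤ c * (P.t (i+1) - P.tag i) + c * (P.tag i - P.t i) := by
            have b1' : |h (P.tag i) - h (P.t i)| ≤ c * (P.tag i - P.t i) := by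
              rw [abs_sub_comm]; exact b1
            linarith [b2]
        _ = c * (P.t (i+1) - P.t i) := by ring
    · exact mul_nonneg hcpos.le (by linarith)
  calc _ ≤ ∑ i ∈ Finset.range P.n, c * (P.t (i+1) - P.t i) := Finset.sum_le_sum key
    _ = c * (P.t P.n - P.t 0) := by rw [← Finset.mul_sum, Finset.sum_range_sub]
    _ = c * (b - a) := by rw [P.t_last, P.t_first]
    _ < ε := by
        rw [hc, div_mul_eq_mul_div, div_lt_iff₀ (by linarith)]
        nlinarith

lemma negVar_null {a b : ℝ} {h : ℝ → ℝ} {E : Set ℝ}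
    (hE0 : volume E = 0) (hdiff : ∀ x ∈ E, DifferentiableAt ℝ h x) : NegVar a b h E := by
  intro ε hε
  set εk : ℕ → ℝ := fun k => ε/2 * (1/2)^k / (k+1) with hεk
  have hεkpos : ∀ k : ℕ, 0 < εk k := fun k => by
    rw [hεk]; positivity
  have hU : ∀ k : ℕ, ∃ U : Set ℝ, {x ∈ E | ⌊|deriv h x|⌋₊ = k} ⊆ U ∧ IsOpen U ∧
      volume U < ENNReal.ofReal (εk k) := by
    intro k
    have := Set.exists_isOpen_lt_of_lt (μ := volume) {x ∈ E | ⌊|deriv h x|⌋₊ = k}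
      (ENNReal.ofReal (εk k)) (by
        rw [show volume {x ∈ E | ⌊|deriv h x|⌋₊ = k} = 0 from
          measure_mono_null (Set.sep_subset _ _) hE0]
        exact ENNReal.ofReal_pos.mpr (hεkpos k))
    obtain ⟨U, hU1, hU2, hU3⟩ := this
    exact ⟨U, hU1, hU2, hU3⟩
  choose U hUsub hUopen hUvol using hU
  have hgauge : ∀ x : ℝ, ∃ d, 0 < d ∧ (x ∈ E →
      (Metric.ball x d ⊆ U (⌊|deriv h x|⌋₊) ∧
       ∀ y, |y - x| < d → |h y - h x| ≤ ((⌊|deriv h x|⌋₊ : ℝ) + 1) * |y - x|)) := by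
    intro x
    by_cases hxE : x ∈ E
    · set k := ⌊|deriv h x|⌋₊ with hk
      set L := deriv h x with hL
      have hdL : HasDerivAt h L x := (hdiff x hxE).hasDerivAt
      have hkL : |L| < (k : ℝ) + 1 := Nat.lt_floor_add_one _
      have hc' : 0 < (k : ℝ) + 1 - |L| := by linarith
      have hlo := (hasDerivAt_iff_isLittleO.mp hdL).def hc'
      rw [Metric.eventually_nhds_iff] at hlo
      obtain ⟨d1, hd1, hball⟩ := hlo
      have hxU : x ∈ U k := hUsub k ⟨hxE, rfl⟩
      obtain ⟨d2, hd2, hball2⟩ := Metric.isOpen_iff.mp (hUopen k) x hxU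
      refine ⟨min d1 d2, lt_min hd1 hd2, fun _ => ⟨?_, ?_⟩⟩
      · exact (Metric.ball_subset_ball (min_le_right _ _)).trans hball2
      · intro y hy
        have := hball (show dist y x < d1 by
          rw [Real.dist_eq]; exact lt_of_lt_of_le hy (min_le_left _ _))
        simp only [Real.norm_eq_abs, smul_eq_mul] at this
        have tri : |h y - h x| ≤ |h y - h x - (y - x) * L| + |(y - x) * L| := by
          have := abs_add_le (h y - h x - (y - x) * L) ((y - x) * L)
          simpa using this
        have am : |(y - x) * L| = |y - x| * |L| := abs_mul _ _
        nlinarith [abs_nonneg (y - x)]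
    · exact ⟨1, one_pos, fun hx' => absurd hx' hxE⟩
  choose δ hδpos hδ using hgauge
  refine ⟨δ, fun x _ => hδpos x, fun P hPs => ?_⟩
  classical
  set κ : ℕ → ℕ := fun i => ⌊|deriv h (P.tag i)|⌋₊ with hκ
  set I : Finset ℕ := (Finset.range P.n).filter (fun i => P.tag i ∈ E) with hI
  have hsum : (∑ i ∈ Finset.range P.n,
      if P.tag i ∈ E then |h (P.t (i + 1)) - h (P.t i)| else 0)
      = ∑ i ∈ I, |h (P.t (i + 1)) - h (P.t i)| := by
    rw [hI, Finset.sum_filter]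
  rw [hsum]
  set T : Finset ℕ := I.image κ with hT
  have hfib : ∑ i ∈ I, |h (P.t (i + 1)) - h (P.t i)|
      = ∑ k ∈ T, ∑ i ∈ I.filter (fun i => κ i = k), |h (P.t (i + 1)) - h (P.t i)| :=
    (Finset.sum_fiberwise_of_maps_to (fun i hi => Finset.mem_image_of_mem κ hi) _).symm
  rw [hfib]
  -- per-fiber bound
  have hinner : ∀ k ∈ T, ∑ i ∈ I.filter (fun i => κ i = k), |h (P.t (i + 1)) - h (P.t i)|
      < ε/2 * (1/2)^k := by
    intro k hk
    set J := I.filter (fun i => κ i = k) with hJ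
    have hJmem : ∀ i ∈ J, i < P.n ∧ P.tag i ∈ E ∧ κ i = k := by
      intro i hi
      rw [hJ, Finset.mem_filter] at hi
      obtain ⟨hi1, hi2⟩ := hi
      rw [hI, Finset.mem_filter, Finset.mem_range] at hi1
      exact ⟨hi1.1, hi1.2, hi2⟩
    have step1 : ∀ i ∈ J, |h (P.t (i + 1)) - h (P.t i)| ≤ ((k:ℝ)+1) * (P.t (i+1) - P.t i) := by
      intro i hi
      obtain ⟨hin, htagE, hκi⟩ := hJmem i hi
      have hlen : P.t i ≤ P.t (i+1) := P.t_mono i hin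
      obtain ⟨htag1, htag2⟩ := P.tag_mem i hin
      have hl := hPs i hin ⟨le_refl _, hlen⟩
      have hr := hPs i hin ⟨hlen, le_refl _⟩
      have habs1 : |P.t i - P.tag i| < δ (P.tag i) := by
        rw [abs_lt]; exact ⟨by linarith [hl.1], by linarith [hl.2]⟩
      have habs2 : |P.t (i+1) - P.tag i| < δ (P.tag i) := by
        rw [abs_lt]; exact ⟨by linarith [hr.1], by linarith [hr.2]⟩
      have hB := (hδ (P.tag i) htagE).2
      have b1 := hB (P.t i) habs1
      have b2 := hB (P.t (i+1)) habs2
      rw [show (⌊|deriv h (P.tag i)|⌋₊) = k from hκi] at b1 b2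
      have e1 : |P.t i - P.tag i| = P.tag i - P.t i := by
        rw [abs_sub_comm]; exact abs_of_nonneg (by linarith)
      have e2 : |P.t (i+1) - P.tag i| = P.t (i+1) - P.tag i := abs_of_nonneg (by linarith)
      rw [e1] at b1; rw [e2] at b2
      calc |h (P.t (i + 1)) - h (P.t i)|
          ≤ |h (P.t (i+1)) - h (P.tag i)| + |h (P.tag i) - h (P.t i)| := by
            have := abs_sub_le (h (P.t (i+1))) (h (P.tag i)) (h (P.t i)); linarith
        _ ≤ ((k:ℝ)+1) * (P.t (i+1) - P.tag i) + ((k:ℝ)+1) * (P.tag i - P.t i) := by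
            have b1' : |h (P.tag i) - h (P.t i)| ≤ ((k:ℝ)+1) * (P.tag i - P.t i) := by
              rw [abs_sub_comm]; exact b1
            linarith [b2]
        _ = ((k:ℝ)+1) * (P.t (i+1) - P.t i) := by ring
    have step2 : ∑ i ∈ J, (P.t (i+1) - P.t i) ≤ (volume (U k)).toReal := by
      apply sum_length_le P ((hUopen k).measurableSet) (ne_top_of_lt (hUvol k)) J
      intro i hi
      obtain ⟨hin, htagE, hκi⟩ := hJmem i hi
      refine ⟨hin, ?_⟩
      have hball := (hδ (P.tag i) htagE).1
      rw [show (⌊|deriv h (P.tag i)|⌋₊) = k from hκi] at hball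
      intro y hy
      apply hball
      rw [Real.ball_eq_Ioo]
      exact hPs i hin (Set.Ioo_subset_Icc_self hy)
    have htoReal : (volume (U k)).toReal < εk k := ENNReal.toReal_lt_of_lt_ofReal (hUvol k)
    calc ∑ i ∈ J, |h (P.t (i + 1)) - h (P.t i)|
        ≤ ∑ i ∈ J, ((k:ℝ)+1) * (P.t (i+1) - P.t i) := Finset.sum_le_sum step1
      _ = ((k:ℝ)+1) * ∑ i ∈ J, (P.t (i+1) - P.t i) := by rw [Finset.mul_sum]
      _ ≤ ((k:ℝ)+1) * (volume (U k)).toReal := by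
          apply mul_le_mul_of_nonneg_left step2 (by positivity)
      _ < ((k:ℝ)+1) * εk k := by
          apply mul_lt_mul_of_pos_left htoReal (by positivity)
      _ = ε/2 * (1/2)^k := by
          rw [hεk]; field_simp
  rcases T.eq_empty_or_nonempty with hTe | hTne
  · rw [hTe]; simpa using hε
  · have h1 := Finset.sum_lt_sum_of_nonempty hTne hinner
    set M := T.max' hTne + 1 with hM
    have h2 : ∑ k ∈ T, ε/2 * (1/2:ℝ)^k ≤ ∑ k ∈ Finset.range M, ε/2 * (1/2:ℝ)^k := by
      apply Finset.sum_le_sum_of_subset_of_nonneg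
      · intro k hk
        rw [Finset.mem_range, hM]
        exact Nat.lt_succ_of_le (Finset.le_max' T k hk)
      · intro k _ _; positivity
    have h3 : ∑ k ∈ Finset.range M, ε/2 * (1/2:ℝ)^k ≤ ε/2 * 2 := by
      rw [← Finset.mul_sum]
      apply mul_le_mul_of_nonneg_left (sum_geometric_two_le M) (by positivity)
    linarith


theorem stmt17 (a b : ℝ) (hab : a ≤ b) (D : Set ℝ) (g F f : ℝ → ℝ)
    (hD : Set.MapsTo g (Set.Icc a b) D)
    (hg : ∀ᵐ x ∂(MeasureTheory.volume.restrict (Set.Icc a b)), DifferentiableAt ℝ g x)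
    (hF : ∀ᵐ x ∂(MeasureTheory.volume.restrict D), DifferentiableAt ℝ F x)
    (hf : ∀ᵐ x ∂(MeasureTheory.volume.restrict D), deriv F x = f x) :
    MeasureTheory.volume
      {x ∈ ({x ∈ Set.Icc a b |
              ¬ ∃ L : ℝ, HasDerivAt g L x ∧ HasDerivAt (F ∘ g) (f (g x) * L) x} \
            ({x ∈ Set.Icc a b | ¬ DifferentiableAt ℝ F (g x)} ∪
             {x ∈ Set.Icc a b | ¬ DifferentiableAt ℝ g x}) ∪
            (({x ∈ Set.Icc a b | ¬ DifferentiableAt ℝ F (g x)} ∪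
              {x ∈ Set.Icc a b | ¬ DifferentiableAt ℝ g x}) \
             {x ∈ Set.Icc a b |
              ¬ ∃ L : ℝ, HasDerivAt g L x ∧ HasDerivAt (F ∘ g) (f (g x) * L) x})) |
        ¬ HasDerivAt (F ∘ g) 0 x} = 0 ∧
    NegVar a b (F ∘ g)
      ({x ∈ Set.Icc a b |
          ¬ ∃ L : ℝ, HasDerivAt g L x ∧ HasDerivAt (F ∘ g) (f (g x) * L) x} \
        ({x ∈ Set.Icc a b | ¬ DifferentiableAt ℝ F (g x)} ∪
         {x ∈ Set.Icc a b | ¬ DifferentiableAt ℝ g x}) ∪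
        (({x ∈ Set.Icc a b | ¬ DifferentiableAt ℝ F (g x)} ∪
          {x ∈ Set.Icc a b | ¬ DifferentiableAt ℝ g x}) \
         {x ∈ Set.Icc a b |
          ¬ ∃ L : ℝ, HasDerivAt g L x ∧ HasDerivAt (F ∘ g) (f (g x) * L) x})) := by
  set B : Set ℝ := {x ∈ Set.Icc a b |
      ¬ ∃ L : ℝ, HasDerivAt g L x ∧ HasDerivAt (F ∘ g) (f (g x) * L) x} with hBdef
  set AF : Set ℝ := {x ∈ Set.Icc a b | ¬ DifferentiableAt ℝ F (g x)} with hAFdef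
  set Ag : Set ℝ := {x ∈ Set.Icc a b | ¬ DifferentiableAt ℝ g x} with hAgdef
  set S : Set ℝ := B \ (AF ∪ Ag) ∪ ((AF ∪ Ag) \ B) with hSdef
  -- the null set in the target of g
  set N₀ : Set ℝ := ({x | ¬ DifferentiableAt ℝ F x} ∪ {x | deriv F x ≠ f x}) ∩ D with hN₀def
  have hN₀ : volume N₀ = 0 := by
    have h1 : volume ({x | ¬ DifferentiableAt ℝ F x} ∩ D) = 0 := by
      refine le_antisymm (le_trans (Measure.le_restrict_apply _ _) ?_) (zero_le)
      rw [show (volume.restrict D) {x | ¬ DifferentiableAt ℝ F x} = 0 from hF]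
    have h2 : volume ({x | deriv F x ≠ f x} ∩ D) = 0 := by
      refine le_antisymm (le_trans (Measure.le_restrict_apply _ _) ?_) (zero_le)
      rw [show (volume.restrict D) {x | ¬ (deriv F x = f x)} = 0 from hf]
    refine measure_mono_null ?_ (measure_union_null h1 h2)
    rw [hN₀def, Set.union_inter_distrib_right]
  set T : Set ℝ := {x : ℝ | g x ∈ N₀ ∧ ∃ L, L ≠ 0 ∧ HasDerivAt g L x} with hTdef
  have hT : volume T = 0 := sv_null hN₀
  have hdiffS : ∀ x ∈ S, DifferentiableAt ℝ (F ∘ g) x := by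
    rintro x (⟨hxB, hxA⟩ | ⟨hxA, hxB⟩)
    · have hFd : DifferentiableAt ℝ F (g x) := by
        by_contra hc; exact hxA (Or.inl ⟨hxB.1, hc⟩)
      have hgd : DifferentiableAt ℝ g x := by
        by_contra hc; exact hxA (Or.inr ⟨hxB.1, hc⟩)
      exact hFd.comp x hgd
    · have hxIcc : x ∈ Set.Icc a b := by
        rcases hxA with h | h
        · exact h.1
        · exact h.1
      have hx' : ∃ L : ℝ, HasDerivAt g L x ∧ HasDerivAt (F ∘ g) (f (g x) * L) x := by
        by_contra hc; exact hxB ⟨hxIcc, hc⟩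
      obtain ⟨L, -, hFgL⟩ := hx'
      exact hFgL.differentiableAt
  have hkey : ∀ x ∈ S, ¬ HasDerivAt (F ∘ g) 0 x → x ∈ T := by
    rintro x (⟨hxB, hxA⟩ | ⟨hxA, hxB⟩) hnot
    · have hFd : DifferentiableAt ℝ F (g x) := by
        by_contra hc; exact hxA (Or.inl ⟨hxB.1, hc⟩)
      have hgd : DifferentiableAt ℝ g x := by
        by_contra hc; exact hxA (Or.inr ⟨hxB.1, hc⟩)
      have hcomp : HasDerivAt (F ∘ g) (deriv F (g x) * deriv g x) x :=
        (hFd.hasDerivAt).comp x (hgd.hasDerivAt)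
      have hL0 : deriv g x ≠ 0 := by
        intro he; rw [he, mul_zero] at hcomp; exact hnot hcomp
      have hne : deriv F (g x) ≠ f (g x) := by
        intro he
        rw [he] at hcomp
        exact hxB.2 ⟨deriv g x, hgd.hasDerivAt, hcomp⟩
      exact ⟨⟨Or.inr hne, hD hxB.1⟩, deriv g x, hL0, hgd.hasDerivAt⟩
    · have hxIcc : x ∈ Set.Icc a b := by
        rcases hxA with h | h
        · exact h.1
        · exact h.1
      have hx' : ∃ L : ℝ, HasDerivAt g L x ∧ HasDerivAt (F ∘ g) (f (g x) * L) x := by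
        by_contra hc; exact hxB ⟨hxIcc, hc⟩
      obtain ⟨L, hgL, hFgL⟩ := hx'
      have hL0 : L ≠ 0 := by
        intro he; rw [he, mul_zero] at hFgL; exact hnot hFgL
      have hFd : ¬ DifferentiableAt ℝ F (g x) := by
        rcases hxA with h | h
        · exact h.2
        · exact absurd hgL.differentiableAt h.2
      exact ⟨⟨Or.inl hFd, hD hxIcc⟩, L, hL0, hgL⟩
  constructor
  · refine measure_mono_null ?_ hT
    rintro x ⟨hxS, hnd⟩
    exact hkey x hxS hnd
  · have hsub : S ⊆ {x ∈ S | HasDerivAt (F ∘ g) 0 x} ∪ (T ∩ S) := by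
      intro x hx
      by_cases hd : HasDerivAt (F ∘ g) 0 x
      · exact Or.inl ⟨hx, hd⟩
      · exact Or.inr ⟨hkey x hx hd, hx⟩
    refine negVar_mono hsub (negVar_union ?_ ?_)
    · exact negVar_zero hab (fun x hx => hx.2)
    · exact negVar_null (measure_mono_null Set.inter_subset_left hT)
        (fun x hx => hdiffS x hx.2)
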